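/- Let k be a separably closed field and D a division algebra over k (k contained in the center of D) that is algebraic over k. Then D is commutative. -/
import Mathlib


/-- A division algebra over a separably closed field `k` (with `k` in the
centre) that is algebraic over `k` is commutative. -/
theorem stmt3 (k D : Type*) [Field k] [IsSepClosed k] [DivisionRing D] [Algebra k D]
    (halg : ∀ d : D, IsAlgebraic k d) :
    ∀ x y : D, x * y = y * x := by
  by_contra hcomm
  push_neg at hcomm
  set K := Subring.center D with hK
  -- the center of a division ring is a field
  have hfield : IsField K := by
    constructor
    · exact ⟨0, 1, by simp⟩
    · exact fun a b => Subtype.ext (Subring.mem_center_iff.mp b.2 a)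
    · rintro ⟨a, ha⟩ h0
      have ha0 : a ≠ 0 := fun h => h0 (Subtype.ext h)
      refine ⟨⟨a⁻¹, Subring.mem_center_iff.mpr fun b => ?_⟩, Subtype.ext ?_⟩
      · have hcomm' := Subring.mem_center_iff.mp ha b
        rw [mul_inv_eq_iff_eq_mul₀ ha0, mul_assoc, hcomm', ← mul_assoc,
          inv_mul_cancel₀ ha0, one_mul]
      · show a * a⁻¹ = 1
        exact mul_inv_cancel₀ ha0
  letI : Field K := hfield.toField
  letI : Algebra k K := RingHom.toAlgebra
    { toFun := fun r => ⟨algebraMap k D r, Subring.mem_center_iff.mpr fun b =>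
        (Algebra.commutes r b).symm⟩
      map_one' := Subtype.ext (map_one _)
      map_mul' := fun x y => Subtype.ext (map_mul _ x y)
      map_zero' := Subtype.ext (map_zero _)
      map_add' := fun x y => Subtype.ext (map_add _ x y) }
  haveI : IsScalarTower k K D := IsScalarTower.of_algebraMap_eq fun x => rfl
  haveI halgD : Algebra.IsAlgebraic k D := ⟨halg⟩
  haveI : Algebra.IsAlgebraic k K :=
    Algebra.IsAlgebraic.tower_bot_of_injective (A := D) Subtype.val_injective
  haveI : IsSepClosed K := Algebra.IsAlgebraic.isSepClosed (F := k)
  haveI : Algebra.IsAlgebraic K D := Algebra.IsAlgebraic.extendScalars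
    (R := k) (algebraMap k K).injective
  have hne : K ≠ (⊤ : Subring D) := by
    intro h
    obtain ⟨x, y, hxy⟩ := hcomm
    exact hxy (Subring.mem_center_iff.mp (h ▸ Subring.mem_top x : x ∈ K) y).symm
  obtain ⟨x, hx, hsep⟩ := JacobsonNoether.exists_separable_and_not_isCentral D hne
  apply hx
  have hint : IsIntegral K x := Algebra.IsIntegral.isIntegral x
  have hdeg := IsSepClosed.degree_eq_one_of_irreducible K (minpoly.irreducible hint) hsep
  obtain ⟨y, hy⟩ := minpoly.mem_range_of_degree_eq_one K x hdeg
  rw [← hy]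
  exact y.2
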